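/- Let d, k, N be integers with N ≥ d+1 > k+1 ≥ 2. Then Q_{d,k}(N) ≤ (2^d - 2^k)/(2^d - 1), with equality if and only if N = d+1. -/
import Mathlib


open Filter Finset Real

private def Sc (n j : ℕ) : ℕ := ∑ i ∈ Finset.range j, n.choose i

private lemma Sc_succ (n j : ℕ) : Sc (n+1) (j+1) + n.choose j = 2 * Sc n (j+1) := by
  induction j with
  | zero => simp [Sc]
  | succ j ih =>
    simp only [Sc, Finset.sum_range_succ] at ih ⊢
    have h := Nat.choose_succ_succ n j
    simp only [Nat.succ_eq_add_one] at h
    omega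

private lemma sum_range_add' {M : Type*} [AddCommMonoid M] (f : ℕ → M) (a b : ℕ) :
    ∑ i ∈ Finset.range (a+b), f i = (∑ i ∈ Finset.range a, f i) + ∑ i ∈ Finset.range b, f (a+i) := by
  induction b with
  | zero => simp
  | succ b ih =>
    rw [show a + (b+1) = (a+b)+1 from rfl, Finset.sum_range_succ, Finset.sum_range_succ, ih,
      add_assoc]

private lemma choose_cross (m k x t : ℕ) :
    m.choose x * (m + k).choose (k + x + t) ≤ m.choose (x + t) * (m + k).choose (k + x) := by
  induction t with
  | zero => simp [Nat.mul_comm]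
  | succ t ih =>
    rw [show k + x + (t+1) = (k+x+t)+1 from rfl, show x + (t+1) = (x+t)+1 from rfl]
    by_cases hm : x + t + 1 ≤ m
    · have hpos : 0 < k + x + t + 1 := Nat.succ_pos _
      apply Nat.le_of_mul_le_mul_right _ hpos
      have h1 : (m+k).choose (k+x+t+1) * (k+x+t+1) = (m+k).choose (k+x+t) * (m - (x+t)) := by
        rw [Nat.choose_succ_right_eq]; congr 1; omega
      have h2 : m.choose (x+t+1) * (x+t+1) = m.choose (x+t) * (m - (x+t)) :=
        Nat.choose_succ_right_eq m (x+t)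
      calc m.choose x * (m+k).choose (k+x+t+1) * (k+x+t+1)
          = m.choose x * ((m+k).choose (k+x+t+1) * (k+x+t+1)) := by ring
        _ = m.choose x * (m+k).choose (k+x+t) * (m - (x+t)) := by rw [h1]; ring
        _ ≤ m.choose (x+t) * (m+k).choose (k+x) * (m-(x+t)) := Nat.mul_le_mul_right _ ih
        _ = (m+k).choose (k+x) * (m.choose (x+t) * (m-(x+t))) := by ring
        _ = (m+k).choose (k+x) * (m.choose (x+t+1) * (x+t+1)) := by rw [h2]
        _ ≤ (m+k).choose (k+x) * (m.choose (x+t+1) * (k+x+t+1)) := by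
            exact Nat.mul_le_mul_left _ (Nat.mul_le_mul_left _ (by omega))
        _ = m.choose (x+t+1) * (m+k).choose (k+x) * (k+x+t+1) := by ring
    · have : m + k < k + x + t + 1 := by omega
      rw [Nat.choose_eq_zero_of_lt this]
      simp

private lemma key (k e p : ℕ) :
    (k+e+2+p).choose (k+e+1) * Sc (e+1+p) (e+1) + (e+1+p).choose e
      ≤ (e+1+p).choose e * Sc (k+e+2+p) (k+e+2) := by
  have hsplit : Sc (k+e+2+p) (k+e+2)
      = (∑ i ∈ Finset.range (k+1), (k+e+2+p).choose i)
        + ∑ i ∈ Finset.range (e+1), (k+e+2+p).choose (k+1+i) := by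
    rw [Sc, show k+e+2 = (k+1)+(e+1) from by omega, sum_range_add']
  have hterm : ∀ i ∈ Finset.range (e+1),
      (k+e+2+p).choose (k+e+1) * (e+1+p).choose i
        ≤ (e+1+p).choose e * (k+e+2+p).choose (k+1+i) := by
    intro i hi
    have hi' : i ≤ e := by simpa using Nat.lt_succ_iff.mp (Finset.mem_range.mp hi)
    have h := choose_cross (e+1+p) (k+1) i (e - i)
    have h1 : e+1+p + (k+1) = k+e+2+p := by omega
    have h2 : k+1+i + (e-i) = k+e+1 := by omega
    have h3 : i + (e-i) = e := by omega
    rw [h1, h2, h3] at h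
    calc (k+e+2+p).choose (k+e+1) * (e+1+p).choose i
        = (e+1+p).choose i * (k+e+2+p).choose (k+e+1) := by ring
      _ ≤ (e+1+p).choose e * (k+e+2+p).choose (k+1+i) := h
  have hsum : (k+e+2+p).choose (k+e+1) * Sc (e+1+p) (e+1)
      ≤ ∑ i ∈ Finset.range (e+1), (e+1+p).choose e * (k+e+2+p).choose (k+1+i) := by
    rw [Sc, Finset.mul_sum]
    exact Finset.sum_le_sum hterm
  have hfirst : 1 ≤ ∑ i ∈ Finset.range (k+1), (k+e+2+p).choose i := by
    calc 1 = (k+e+2+p).choose 0 := by simp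
      _ ≤ _ := Finset.single_le_sum (f := fun i => (k+e+2+p).choose i)
          (fun i _ => Nat.zero_le _) (Finset.mem_range.mpr (Nat.succ_pos k))
  calc (k+e+2+p).choose (k+e+1) * Sc (e+1+p) (e+1) + (e+1+p).choose e
      ≤ (∑ i ∈ Finset.range (e+1), (e+1+p).choose e * (k+e+2+p).choose (k+1+i))
        + (e+1+p).choose e * ∑ i ∈ Finset.range (k+1), (k+e+2+p).choose i := by
        have := Nat.mul_le_mul_left ((e+1+p).choose e) hfirst
        omega
    _ = (e+1+p).choose e * Sc (k+e+2+p) (k+e+2) := by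
        rw [hsplit, Nat.mul_add, Finset.mul_sum, Finset.mul_sum]; omega

private lemma Sc_pos (n j : ℕ) (hj : 1 ≤ j) : 1 ≤ Sc n j := by
  calc 1 = n.choose 0 := by simp
    _ ≤ _ := Finset.single_le_sum (f := fun i => n.choose i)
        (fun i _ => Nat.zero_le _) (Finset.mem_range.mpr hj)

private lemma mono (k e p : ℕ) :
    Sc (e+1+(p+1)) (e+1) * Sc (k+e+2+p) (k+e+2) + 1
      ≤ Sc (e+1+p) (e+1) * Sc (k+e+2+(p+1)) (k+e+2) := by
  have hA : Sc (e+1+(p+1)) (e+1) + (e+1+p).choose e = 2 * Sc (e+1+p) (e+1) :=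
    Sc_succ (e+1+p) e
  have hB : Sc (k+e+2+(p+1)) (k+e+2) + (k+e+2+p).choose (k+e+1) = 2 * Sc (k+e+2+p) (k+e+2) :=
    Sc_succ (k+e+2+p) (k+e+1)
  have hkey := key k e p
  have ha : 1 ≤ (e+1+p).choose e := Nat.choose_pos (by omega)
  set A := Sc (e+1+p) (e+1) with hA'
  set B := Sc (k+e+2+p) (k+e+2) with hB'
  set A' := Sc (e+1+(p+1)) (e+1) with hA''
  set B' := Sc (k+e+2+(p+1)) (k+e+2) with hB''
  set a := (e+1+p).choose e with ha'
  set b := (k+e+2+p).choose (k+e+1) with hb'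
  have h1 : (A' + a) * B = A * (B' + b) := by rw [hA, hB]; ring
  have h2 : A' * B + a * B = A * B' + A * b := by
    calc A' * B + a * B = (A' + a) * B := (Nat.add_mul _ _ _).symm
      _ = A * (B' + b) := h1
      _ = A * B' + A * b := Nat.mul_add _ _ _
  have h3 : b * A = A * b := Nat.mul_comm _ _
  omega

private lemma R1 (k e p : ℕ) :
    Sc (e+1+p) (e+1) * Sc (k+e+2) (k+e+2) ≤ Sc (e+1) (e+1) * Sc (k+e+2+p) (k+e+2) := by
  induction p with
  | zero => exact le_refl _
  | succ p ih =>
    have hm : Sc (e+1+(p+1)) (e+1) * Sc (k+e+2+p) (k+e+2)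
        ≤ Sc (e+1+p) (e+1) * Sc (k+e+2+(p+1)) (k+e+2) := Nat.le_of_succ_le (mono k e p)
    have hBpos : 0 < Sc (k+e+2+p) (k+e+2) := Sc_pos _ _ (by omega)
    set A0 := Sc (e+1) (e+1)
    set B0 := Sc (k+e+2) (k+e+2)
    set A1 := Sc (e+1+p) (e+1)
    set B1 := Sc (k+e+2+p) (k+e+2)
    set A2 := Sc (e+1+(p+1)) (e+1)
    set B2 := Sc (k+e+2+(p+1)) (k+e+2)
    apply Nat.le_of_mul_le_mul_right _ hBpos
    calc A2 * B0 * B1 = (A2 * B1) * B0 := by ring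
      _ ≤ (A1 * B2) * B0 := Nat.mul_le_mul_right _ hm
      _ = (A1 * B0) * B2 := by ring
      _ ≤ (A0 * B1) * B2 := Nat.mul_le_mul_right _ ih
      _ = (A0 * B2) * B1 := by ring

private lemma R2 (k e p : ℕ) :
    Sc (e+1+(p+1)) (e+1) * Sc (k+e+2) (k+e+2) < Sc (e+1) (e+1) * Sc (k+e+2+(p+1)) (k+e+2) := by
  have hm := mono k e p
  have ih := R1 k e p
  have hB0 : 0 < Sc (k+e+2) (k+e+2) := Sc_pos _ _ (by omega)
  have hBpos : 0 < Sc (k+e+2+p) (k+e+2) := Sc_pos _ _ (by omega)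
  set A0 := Sc (e+1) (e+1)
  set B0 := Sc (k+e+2) (k+e+2)
  set A1 := Sc (e+1+p) (e+1)
  set B1 := Sc (k+e+2+p) (k+e+2)
  set A2 := Sc (e+1+(p+1)) (e+1)
  set B2 := Sc (k+e+2+(p+1)) (k+e+2)
  have hcancel : A2 * B0 * B1 < A0 * B2 * B1 := by
    calc A2 * B0 * B1 = (A2 * B1) * B0 := by ring
      _ < (A1 * B2) * B0 := by
          have := Nat.mul_le_mul_right B0 hm
          have h1 : (A2 * B1 + 1) * B0 = A2 * B1 * B0 + B0 := by ring
          omega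
      _ = (A1 * B0) * B2 := by ring
      _ ≤ (A0 * B1) * B2 := Nat.mul_le_mul_right _ ih
      _ = (A0 * B2) * B1 := by ring
  exact Nat.lt_of_mul_lt_mul_right hcancel

private lemma Sc_diag (n : ℕ) : Sc (n+1) (n+1) + 1 = 2^(n+1) := by
  have h := Nat.sum_range_choose (n+1)
  rw [Finset.sum_range_succ] at h
  simp only [Sc]
  simpa using h

/-- `Q d k N = 2^k · (Σ_{i=0}^{d-k-1} C(N-k-1, i)) / (Σ_{i=0}^{d-1} C(N-1, i))`,
the normalized expected `k`-face number `E f_k(C_N)/C(N,k)` of the Cover–Efron cone. -/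
noncomputable def Q (d k N : ℕ) : ℝ :=
  2 ^ k * (∑ i ∈ Finset.range (d - k), ((N - k - 1).choose i : ℝ)) /
    (∑ i ∈ Finset.range d, ((N - 1).choose i : ℝ))

theorem Q_le_max (d k N : ℕ) (hk : 1 ≤ k) (hkd : k < d) (hdN : d + 1 ≤ N) :
    Q d k N ≤ ((2 : ℝ) ^ d - 2 ^ k) / ((2 : ℝ) ^ d - 1) ∧
      (Q d k N = ((2 : ℝ) ^ d - 2 ^ k) / ((2 : ℝ) ^ d - 1) ↔ N = d + 1) := by
  obtain ⟨k0, rfl⟩ : ∃ k0, k = k0 + 1 := ⟨k - 1, by omega⟩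
  obtain ⟨e0, rfl⟩ : ∃ e0, d = k0 + e0 + 2 := ⟨d - k0 - 2, by omega⟩
  obtain ⟨p0, rfl⟩ : ∃ p0, N = k0 + e0 + 3 + p0 := ⟨N - (k0 + e0 + 3), by omega⟩
  have hQ : Q (k0+e0+2) (k0+1) (k0+e0+3+p0)
      = 2^(k0+1) * (Sc (e0+1+p0) (e0+1) : ℝ) / (Sc (k0+e0+2+p0) (k0+e0+2) : ℝ) := by
    rw [Q, Sc, Sc]
    rw [show (k0+e0+2) - (k0+1) = e0+1 from by omega,
      show (k0+e0+3+p0) - (k0+1) - 1 = e0+1+p0 from by omega,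
      show (k0+e0+3+p0) - 1 = k0+e0+2+p0 from by omega]
    push_cast
    ring
  have hBposN : 0 < Sc (k0+e0+2+p0) (k0+e0+2) := Sc_pos _ _ (by omega)
  have hBpos : (0:ℝ) < (Sc (k0+e0+2+p0) (k0+e0+2) : ℝ) := by exact_mod_cast hBposN
  have hone : (1:ℝ) < 2 ^ (k0+e0+2) := by
    apply one_lt_pow₀ (by norm_num) (by omega)
  have hden : (0:ℝ) < 2 ^ (k0+e0+2) - 1 := by linarith
  have hA0 : Sc (e0+1) (e0+1) + 1 = 2^(e0+1) := Sc_diag e0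
  have hB0 : Sc (k0+e0+2) (k0+e0+2) + 1 = 2^(k0+e0+2) := by
    have h := Sc_diag (k0+e0+1)
    rw [show k0+e0+1+1 = k0+e0+2 from by omega] at h
    exact h
  have hA0R : (Sc (e0+1) (e0+1) : ℝ) = 2^(e0+1) - 1 := by
    have : ((Sc (e0+1) (e0+1) + 1 : ℕ) : ℝ) = ((2^(e0+1) : ℕ) : ℝ) := by exact_mod_cast hA0
    push_cast at this
    linarith
  have hB0R : (Sc (k0+e0+2) (k0+e0+2) : ℝ) = 2^(k0+e0+2) - 1 := by
    have : ((Sc (k0+e0+2) (k0+e0+2) + 1 : ℕ) : ℝ) = ((2^(k0+e0+2) : ℕ) : ℝ) := by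
      exact_mod_cast hB0
    push_cast at this
    linarith
  have hsplitpow : (2:ℝ)^(k0+e0+2) = 2^(k0+1) * 2^(e0+1) := by
    rw [show k0+e0+2 = (k0+1)+(e0+1) from by omega, pow_add]
  have hFN := R1 k0 e0 p0
  have hFNR : (Sc (e0+1+p0) (e0+1) : ℝ) * (2^(k0+e0+2) - 1)
      ≤ (2^(e0+1) - 1) * (Sc (k0+e0+2+p0) (k0+e0+2) : ℝ) := by
    rw [← hA0R, ← hB0R]
    calc (Sc (e0+1+p0) (e0+1) : ℝ) * (Sc (k0+e0+2) (k0+e0+2) : ℝ)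
        = ((Sc (e0+1+p0) (e0+1) * Sc (k0+e0+2) (k0+e0+2) : ℕ) : ℝ) := by push_cast; ring
      _ ≤ ((Sc (e0+1) (e0+1) * Sc (k0+e0+2+p0) (k0+e0+2) : ℕ) : ℝ) := by exact_mod_cast hFN
      _ = _ := by push_cast; ring
  refine ⟨?_, ?_, ?_⟩
  · rw [hQ, div_le_div_iff₀ hBpos hden]
    calc 2^(k0+1) * (Sc (e0+1+p0) (e0+1) : ℝ) * (2^(k0+e0+2) - 1)
        = 2^(k0+1) * ((Sc (e0+1+p0) (e0+1) : ℝ) * (2^(k0+e0+2) - 1)) := by ring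
      _ ≤ 2^(k0+1) * ((2^(e0+1) - 1) * (Sc (k0+e0+2+p0) (k0+e0+2) : ℝ)) := by
          exact mul_le_mul_of_nonneg_left hFNR (by positivity)
      _ = (2^(k0+e0+2) - 2^(k0+1)) * (Sc (k0+e0+2+p0) (k0+e0+2) : ℝ) := by
          rw [hsplitpow]; ring
  · intro heq
    rw [hQ, div_eq_div_iff hBpos.ne' hden.ne'] at heq
    have h3 : (Sc (e0+1+p0) (e0+1) : ℝ) * (2^(k0+e0+2) - 1)
        = (2^(e0+1) - 1) * (Sc (k0+e0+2+p0) (k0+e0+2) : ℝ) := by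
      apply mul_left_cancel₀ (show (2:ℝ)^(k0+1) ≠ 0 by positivity)
      linear_combination heq - (Sc (k0+e0+2+p0) (k0+e0+2) : ℝ) * hsplitpow
    rw [← hA0R, ← hB0R] at h3
    have h5 : Sc (e0+1+p0) (e0+1) * Sc (k0+e0+2) (k0+e0+2)
        = Sc (e0+1) (e0+1) * Sc (k0+e0+2+p0) (k0+e0+2) := by exact_mod_cast h3
    cases p0 with
    | zero => omega
    | succ q => exact absurd h5 (Nat.ne_of_lt (R2 k0 e0 q))
  · intro hN
    have hp : p0 = 0 := by omega
    subst hp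
    rw [hQ]
    rw [show e0+1+0 = e0+1 from rfl, show k0+e0+2+0 = k0+e0+2 from rfl, hA0R, hB0R]
    rw [hsplitpow]
    ring
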